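/- Let G be a finite simple graph with Edmonds–Gallai decomposition V(G) = A ⊔ C ⊔ D. Then ker(G) is contained in the union of the singleton components of G[D]. -/

import Mathlib

open Classical Finset

/-- Neighborhood of a set of vertices: all vertices adjacent to some vertex of `X`. -/
noncomputable def nbhd {V : Type*} (G : SimpleGraph V) [Fintype V] (X : Finset V) : Finset V :=
  Finset.univ.filter (fun v => ∃ x ∈ X, G.Adj x v)

/-- The difference `d(X) = |X| - |N(X)|`. -/
noncomputable def gdiff {V : Type*} (G : SimpleGraph V) [Fintype V] (X : Finset V) : ℤ :=
  (X.card : ℤ) - ((nbhd G X).card : ℤ)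

/-- `X` is an independent set of `G`. -/
def IsIndep {V : Type*} (G : SimpleGraph V) (X : Finset V) : Prop :=
  ∀ x ∈ X, ∀ y ∈ X, ¬ G.Adj x y

/-- The critical difference `d_c(G) = max { d(X) : X ⊆ V(G) }`. -/
noncomputable def critDiff {V : Type*} (G : SimpleGraph V) [Fintype V] : ℤ :=
  Finset.univ.powerset.sup' ⟨∅, Finset.empty_mem_powerset _⟩ (gdiff G)

/-- `X` is a critical set of `G`. -/
noncomputable def IsCritical {V : Type*} (G : SimpleGraph V) [Fintype V] (X : Finset V) : Prop :=
  gdiff G X = critDiff G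

/-- `ker G` : the intersection of all critical sets of `G`. -/
noncomputable def kerG {V : Type*} (G : SimpleGraph V) [Fintype V] : Finset V :=
  Finset.univ.filter (fun v => ∀ X : Finset V, IsCritical G X → v ∈ X)

/-- `diadem G` : the union of all critical independent sets of `G`. -/
noncomputable def diademG {V : Type*} (G : SimpleGraph V) [Fintype V] : Finset V :=
  Finset.univ.filter (fun v => ∃ X : Finset V, IsCritical G X ∧ IsIndep G X ∧ v ∈ X)

/-- The independence number `α(G)`. -/
noncomputable def alphaG {V : Type*} (G : SimpleGraph V) [Fintype V] : ℕ :=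
  (Finset.univ.powerset.filter (IsIndep G)).sup Finset.card

/-- `core G` : the intersection of all maximum independent sets of `G`. -/
noncomputable def coreG {V : Type*} (G : SimpleGraph V) [Fintype V] : Finset V :=
  Finset.univ.filter (fun v => ∀ I : Finset V, IsIndep G I → I.card = alphaG G → v ∈ I)

/-- `M` is a matching of `G`, given as a finite set of pairwise disjoint edges of `G`. -/
def IsMatchingF {V : Type*} (G : SimpleGraph V) (M : Finset (Sym2 V)) : Prop :=
  (↑M : Set (Sym2 V)) ⊆ G.edgeSet ∧
    ∀ e₁ ∈ M, ∀ e₂ ∈ M, e₁ ≠ e₂ → ∀ v : V, v ∈ e₁ → v ∉ e₂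

/-- The matching number `μ(G)`. -/
noncomputable def matchNum {V : Type*} (G : SimpleGraph V) [Fintype V] : ℕ :=
  ((Finset.univ : Finset (Finset (Sym2 V))).filter (IsMatchingF G)).sup Finset.card

/-- There is a matching from `A` into `B`: an injection of `A` into `B` along edges of `G`. -/
def MatchingFromInto {V : Type*} (G : SimpleGraph V) (A B : Finset V) : Prop :=
  ∃ f : V → V, Set.InjOn f ↑A ∧ ∀ a ∈ A, f a ∈ B ∧ G.Adj a (f a)

/-- The auxiliary bipartite graph `H_X` on vertex set `X ∪ N(X) ∪ {v, w}`, where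
`v = Sum.inr false` and `w = Sum.inr true`.  Its edges are the edges of `G` between
`X` and `N(X)`, the edge `vw`, and all edges from `v` to `N(X)`. -/
noncomputable def HX {V : Type*} (G : SimpleGraph V) [Fintype V] (X : Finset V) :
    SimpleGraph ({a : V // a ∈ X ∪ nbhd G X} ⊕ Bool) :=
  SimpleGraph.fromRel (fun p q =>
    match p, q with
    | Sum.inl a, Sum.inl b => a.1 ∈ X ∧ b.1 ∈ nbhd G X ∧ G.Adj a.1 b.1
    | Sum.inr false, Sum.inr true => True
    | Sum.inr false, Sum.inl b => b.1 ∈ nbhd G X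
    | _, _ => False)

/-- The copy of `X` inside the vertex set of `H_X`. -/
noncomputable def Xlift {V : Type*} (G : SimpleGraph V) [Fintype V] (X : Finset V) :
    Finset ({a : V // a ∈ X ∪ nbhd G X} ⊕ Bool) :=
  Finset.univ.filter (fun p => ∃ a : {a : V // a ∈ X ∪ nbhd G X}, p = Sum.inl a ∧ a.1 ∈ X)

/-- Edmonds–Gallai set `D`: vertices missed by some maximum matching. -/
noncomputable def gallaiD {V : Type*} (G : SimpleGraph V) [Fintype V] : Finset V :=
  Finset.univ.filter (fun v => ∃ M : Finset (Sym2 V),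
    IsMatchingF G M ∧ M.card = matchNum G ∧ ∀ e ∈ M, v ∉ e)

/-- Edmonds–Gallai set `A = N(D) - D`. -/
noncomputable def gallaiA {V : Type*} (G : SimpleGraph V) [Fintype V] : Finset V :=
  nbhd G (gallaiD G) \ gallaiD G

/-- Edmonds–Gallai set `C = V - A - D`. -/
noncomputable def gallaiC {V : Type*} (G : SimpleGraph V) [Fintype V] : Finset V :=
  (Finset.univ \ gallaiD G) \ gallaiA G

/-- The vertices of the singleton components of `G[D]`. -/
noncomputable def singlesD {V : Type*} (G : SimpleGraph V) [Fintype V] : Finset V :=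
  (gallaiD G).filter (fun v => ∀ w ∈ gallaiD G, ¬ G.Adj v w)


set_option linter.unusedSectionVars false
section Dev
variable {V : Type*} (G : SimpleGraph V) [Fintype V] [DecidableEq V] [DecidableRel G.Adj]

lemma mem_nbhd {v : V} {X : Finset V} : v ∈ nbhd G X ↔ ∃ x ∈ X, G.Adj x v := by
  simp [nbhd]

lemma gdiff_le_critDiff (X : Finset V) : gdiff G X ≤ critDiff G :=
  Finset.le_sup' _ (Finset.mem_powerset.2 (Finset.subset_univ X))

lemma exists_critical : ∃ X : Finset V, IsCritical G X := by
  obtain ⟨X, _, h⟩ := Finset.exists_mem_eq_sup' ⟨∅, Finset.empty_mem_powerset _⟩ (gdiff G)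
  exact ⟨X, h.symm⟩

lemma nbhd_subset {X Y : Finset V} (h : X ⊆ Y) : nbhd G X ⊆ nbhd G Y := by
  intro v hv
  rw [mem_nbhd] at hv ⊢
  obtain ⟨x, hx, ha⟩ := hv
  exact ⟨x, h hx, ha⟩

lemma nbhd_union (X Y : Finset V) : nbhd G (X ∪ Y) = nbhd G X ∪ nbhd G Y := by
  ext v
  simp only [mem_nbhd, Finset.mem_union]
  constructor
  · rintro ⟨x, hx | hx, ha⟩
    · exact Or.inl ⟨x, hx, ha⟩
    · exact Or.inr ⟨x, hx, ha⟩
  · rintro (⟨x, hx, ha⟩ | ⟨x, hx, ha⟩)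
    · exact ⟨x, Or.inl hx, ha⟩
    · exact ⟨x, Or.inr hx, ha⟩

lemma critical_inter {X Y : Finset V} (hX : IsCritical G X) (hY : IsCritical G Y) :
    IsCritical G (X ∩ Y) := by
  have h1 : ((nbhd G (X ∩ Y)).card : ℤ) + ((nbhd G (X ∪ Y)).card : ℤ)
      ≤ ((nbhd G X).card : ℤ) + ((nbhd G Y).card : ℤ) := by
    have hsub : nbhd G (X ∩ Y) ⊆ nbhd G X ∩ nbhd G Y := by
      intro v hv
      exact Finset.mem_inter.2 ⟨nbhd_subset G Finset.inter_subset_left hv,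
        nbhd_subset G Finset.inter_subset_right hv⟩
    have := Finset.card_le_card hsub
    have hcard := Finset.card_inter_add_card_union (nbhd G X) (nbhd G Y)
    rw [nbhd_union]
    omega
  have h2 : (X.card : ℤ) + (Y.card : ℤ) = ((X ∩ Y).card : ℤ) + ((X ∪ Y).card : ℤ) := by
    have := Finset.card_inter_add_card_union X Y
    omega
  have hsum : gdiff G X + gdiff G Y ≤ gdiff G (X ∩ Y) + gdiff G (X ∪ Y) := by
    unfold gdiff
    omega
  have hi := gdiff_le_critDiff G (X ∩ Y)
  have hu := gdiff_le_critDiff G (X ∪ Y)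
  unfold IsCritical at hX hY ⊢
  omega

lemma mem_kerG {v : V} : v ∈ kerG G ↔ ∀ X : Finset V, IsCritical G X → v ∈ X := by
  simp [kerG]

lemma kerG_subset_critical {X : Finset V} (hX : IsCritical G X) : kerG G ⊆ X := by
  intro v hv
  exact (mem_kerG G).1 hv X hX

lemma kerG_critical : IsCritical G (kerG G) := by
  classical
  set C : Finset (Finset V) := Finset.univ.filter (fun X => IsCritical G X) with hC
  have hne : C.Nonempty := by
    obtain ⟨X, hX⟩ := exists_critical G
    exact ⟨X, by simp [hC, hX]⟩
  have hker : kerG G = C.inf' hne id := by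
    apply Finset.Subset.antisymm
    · apply Finset.inf'_induction (p := fun Z => kerG G ⊆ Z)
      · intro a ha b hb
        exact fun x hx => Finset.mem_inter.2 ⟨ha hx, hb hx⟩
      · intro X hX
        exact kerG_subset_critical G (by simpa [hC] using hX)
    · intro v hv
      rw [mem_kerG]
      intro X hX
      have hle : C.inf' hne id ≤ id X := Finset.inf'_le id (by simp [hC, hX])
      exact hle hv
  rw [hker]
  have := Finset.inf'_mem (s := {Z : Finset V | IsCritical G Z})
    (fun x hx y hy => critical_inter G hx hy) C hne id
    (fun X hX => by simpa [hC] using hX)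
  exact this


lemma sdiff_nbhd_critical {X : Finset V} (hX : IsCritical G X) :
    IsCritical G (X \ nbhd G X) := by
  set Y := X \ nbhd G X with hY
  have hNY : nbhd G Y ⊆ nbhd G X \ X := by
    intro u hu
    rw [mem_nbhd] at hu
    obtain ⟨y, hy, ha⟩ := hu
    rw [hY, Finset.mem_sdiff] at hy
    refine Finset.mem_sdiff.2 ⟨nbhd_subset G (Finset.sdiff_subset) ((mem_nbhd G).2 ⟨y, Finset.mem_sdiff.2 hy, ha⟩), ?_⟩
    intro huX
    exact hy.2 ((mem_nbhd G).2 ⟨u, huX, ha.symm⟩)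
  have hcY : (Y.card : ℤ) = X.card - (X ∩ nbhd G X).card := by
    have := Finset.card_inter_add_card_sdiff X (nbhd G X)
    rw [hY]; omega
  have hcNY : ((nbhd G Y).card : ℤ) ≤ (nbhd G X).card - (X ∩ nbhd G X).card := by
    have h1 := Finset.card_le_card hNY
    have h2 : (nbhd G X \ X).card = (nbhd G X).card - (nbhd G X ∩ X).card := by
      have := Finset.card_inter_add_card_sdiff (nbhd G X) X
      omega
    rw [Finset.inter_comm]
    have h3 : (nbhd G X ∩ X).card ≤ (nbhd G X).card := Finset.card_le_card Finset.inter_subset_left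
    omega
  have hge : gdiff G X ≤ gdiff G Y := by unfold gdiff; omega
  have := gdiff_le_critDiff G Y
  unfold IsCritical at hX ⊢
  omega

lemma kerG_not_mem_nbhd {v : V} (hv : v ∈ kerG G) : v ∉ nbhd G (kerG G) := by
  intro hvn
  have hcrit := sdiff_nbhd_critical G (kerG_critical G)
  have := kerG_subset_critical G hcrit hv
  rw [Finset.mem_sdiff] at this
  exact this.2 hvn

/-- The key Hall-type condition coming from criticality of `ker G`. -/
lemma hall_cond {v : V} (hv : v ∈ kerG G) {S : Finset V} (hS : S ⊆ nbhd G (kerG G)) :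
    S.card ≤ ((kerG G).erase v ∩ nbhd G S).card := by
  classical
  set X' := kerG G \ nbhd G S with hX'
  have hX'sub : X' ⊆ (kerG G) := Finset.sdiff_subset
  have hNX' : nbhd G X' ⊆ nbhd G (kerG G) \ S := by
    intro u hu
    rw [mem_nbhd] at hu
    obtain ⟨x, hx, ha⟩ := hu
    rw [hX', Finset.mem_sdiff] at hx
    refine Finset.mem_sdiff.2 ⟨(mem_nbhd G).2 ⟨x, hx.1, ha⟩, ?_⟩
    intro huS
    exact hx.2 ((mem_nbhd G).2 ⟨u, huS, ha.symm⟩)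
  have hc1 : (X'.card : ℤ) = (kerG G).card - ((kerG G) ∩ nbhd G S).card := by
    have := Finset.card_inter_add_card_sdiff (kerG G) (nbhd G S)
    rw [hX']; omega
  have hc2 : ((nbhd G X').card : ℤ) ≤ (nbhd G (kerG G)).card - S.card := by
    have h1 := Finset.card_le_card hNX'
    have h2 := Finset.card_sdiff_of_subset hS
    have h3 := Finset.card_le_card hS
    omega
  have hle := gdiff_le_critDiff G X'
  have hker := kerG_critical G
  unfold IsCritical at hker
  -- first: S.card ≤ ((kerG G) ∩ nbhd G S).card
  have hSle : S.card ≤ ((kerG G) ∩ nbhd G S).card := by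
    by_contra hlt
    push_neg at hlt
    have : gdiff G X' > critDiff G := by
      unfold gdiff at hker ⊢
      have : (((kerG G) ∩ nbhd G S).card : ℤ) < S.card := by exact_mod_cast hlt
      omega
    omega
  -- strict when v ∈ nbhd G S
  by_cases hvS : v ∈ nbhd G S
  · have hne : S.card ≠ ((kerG G) ∩ nbhd G S).card := by
      intro heq
      have hcritX' : IsCritical G X' := by
        unfold IsCritical
        have h4 : gdiff G X' ≥ critDiff G := by
          unfold gdiff at hker ⊢
          have : (((kerG G) ∩ nbhd G S).card : ℤ) = S.card := by exact_mod_cast heq.symm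
          omega
        omega
      have hvX' := kerG_subset_critical G hcritX' hv
      rw [hX', Finset.mem_sdiff] at hvX'
      exact hvX'.2 hvS
    have hstrict : S.card + 1 ≤ ((kerG G) ∩ nbhd G S).card := by omega
    have : ((kerG G) ∩ nbhd G S).card ≤ ((kerG G).erase v ∩ nbhd G S).card + 1 := by
      have hsub2 : (kerG G) ∩ nbhd G S ⊆ insert v ((kerG G).erase v ∩ nbhd G S) := by
        intro x hx
        rcases eq_or_ne x v with rfl | hxv
        · exact Finset.mem_insert_self _ _
        · rw [Finset.mem_inter] at hx
          exact Finset.mem_insert_of_mem (Finset.mem_inter.2 ⟨Finset.mem_erase.2 ⟨hxv, hx.1⟩, hx.2⟩)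
      have := Finset.card_le_card hsub2
      have := Finset.card_insert_le v ((kerG G).erase v ∩ nbhd G S)
      omega
    omega
  · have hsub2 : (kerG G) ∩ nbhd G S ⊆ (kerG G).erase v ∩ nbhd G S := by
      intro x hx
      rw [Finset.mem_inter] at hx
      refine Finset.mem_inter.2 ⟨Finset.mem_erase.2 ⟨?_, hx.1⟩, hx.2⟩
      rintro rfl
      exact hvS hx.2
    exact hSle.trans (Finset.card_le_card hsub2)


/-- Restricted matchings: matchings avoiding `ker G ∪ N(ker G)`. -/
noncomputable def muR (G : SimpleGraph V) [Fintype V] : ℕ :=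
  ((Finset.univ : Finset (Finset (Sym2 V))).filter (fun M => IsMatchingF G M ∧
    ∀ e ∈ M, ∀ x ∈ e, x ∈ Finset.univ \ (kerG G ∪ nbhd G (kerG G)))).sup Finset.card

lemma isMatchingF_subset {M N : Finset (Sym2 V)} (h : N ⊆ M) (hM : IsMatchingF G M) :
    IsMatchingF G N := by
  refine ⟨fun e he => hM.1 (h (Finset.mem_coe.1 he)), ?_⟩
  intro e₁ he₁ e₂ he₂ hne x hx
  exact hM.2 e₁ (h he₁) e₂ (h he₂) hne x hx

lemma card_le_matchNum {M : Finset (Sym2 V)} (hM : IsMatchingF G M) : M.card ≤ matchNum G :=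
  Finset.le_sup (by simp [hM])

lemma card_filter_meet_le {M : Finset (Sym2 V)} (hM : IsMatchingF G M) (T : Finset V) :
    (M.filter (fun e => ∃ x ∈ T, x ∈ e)).card ≤ T.card := by
  classical
  rcases T.eq_empty_or_nonempty with rfl | ⟨w₀, _⟩
  · simp
  apply Finset.card_le_card_of_injOn (fun e => if h : ∃ x ∈ T, x ∈ e then h.choose else w₀)
  · intro e he
    rw [Finset.mem_coe, Finset.mem_filter] at he
    dsimp only
    rw [dif_pos he.2]
    exact he.2.choose_spec.1
  · intro e₁ he₁ e₂ he₂ heq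
    rw [Finset.mem_coe, Finset.mem_filter] at he₁ he₂
    dsimp only at heq
    rw [dif_pos he₁.2, dif_pos he₂.2] at heq
    by_contra hne
    exact hM.2 e₁ he₁.1 e₂ he₂.1 hne _ he₁.2.choose_spec.2 (heq ▸ he₂.2.choose_spec.2)

lemma rest_le_muR {M : Finset (Sym2 V)} (hM : IsMatchingF G M) :
    (M.filter (fun e => ¬ ∃ x ∈ nbhd G (kerG G), x ∈ e)).card ≤ muR G := by
  classical
  apply Finset.le_sup (f := Finset.card)
  rw [Finset.mem_filter]
  refine ⟨Finset.mem_univ _, isMatchingF_subset G (Finset.filter_subset _ _) hM, ?_⟩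
  intro e he x hx
  rw [Finset.mem_filter] at he
  have hxn : x ∉ nbhd G (kerG G) := fun hc => he.2 ⟨x, hc, hx⟩
  rw [Finset.mem_sdiff, Finset.mem_union]
  refine ⟨Finset.mem_univ _, ?_⟩
  rintro (hxk | hxk)
  · -- x ∈ ker G, so the other endpoint of e is in N(ker G)
    have hedge : e ∈ G.edgeSet := hM.1 (he.1)
    induction e using Sym2.ind with
    | _ a b =>
      rw [SimpleGraph.mem_edgeSet] at hedge
      rw [Sym2.mem_iff] at hx
      rcases hx with rfl | rfl
      · exact he.2 ⟨b, (mem_nbhd G).2 ⟨x, hxk, hedge⟩, Sym2.mem_mk_right x b⟩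
      · exact he.2 ⟨a, (mem_nbhd G).2 ⟨x, hxk, hedge.symm⟩, Sym2.mem_mk_left a x⟩
  · exact hxn hxk

lemma matchNum_le_bound : matchNum G ≤ (nbhd G (kerG G)).card + muR G := by
  classical
  apply Finset.sup_le
  intro M hMmem
  rw [Finset.mem_filter] at hMmem
  have hM := hMmem.2
  have hsplit := Finset.card_filter_add_card_filter_not
    (s := M) (p := fun e => ∃ x ∈ nbhd G (kerG G), x ∈ e)
  beta_reduce at hsplit
  have h1 := card_filter_meet_le G hM (nbhd G (kerG G))
  have h2 := rest_le_muR G hM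
  omega

lemma matching_missing_lt {M : Finset (Sym2 V)} (hM : IsMatchingF G M) {w : V}
    (hw : w ∈ nbhd G (kerG G)) (hmiss : ∀ e ∈ M, w ∉ e) :
    M.card + 1 ≤ (nbhd G (kerG G)).card + muR G := by
  classical
  have hsplit := Finset.card_filter_add_card_filter_not
    (s := M) (p := fun e => ∃ x ∈ nbhd G (kerG G), x ∈ e)
  beta_reduce at hsplit
  have hsub : M.filter (fun e => ∃ x ∈ nbhd G (kerG G), x ∈ e)
      ⊆ M.filter (fun e => ∃ x ∈ (nbhd G (kerG G)).erase w, x ∈ e) := by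
    intro e he
    rw [Finset.mem_filter] at he ⊢
    obtain ⟨x, hx1, hx2⟩ := he.2
    refine ⟨he.1, x, Finset.mem_erase.2 ⟨?_, hx1⟩, hx2⟩
    rintro rfl
    exact hmiss e he.1 hx2
  have h1 : (M.filter (fun e => ∃ x ∈ nbhd G (kerG G), x ∈ e)).card
      ≤ ((nbhd G (kerG G)).erase w).card :=
    (Finset.card_le_card hsub).trans (card_filter_meet_le G hM _)
  have herase := Finset.card_erase_of_mem hw
  have hpos : 1 ≤ (nbhd G (kerG G)).card := Finset.card_pos.2 ⟨w, hw⟩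
  have h2 := rest_le_muR G hM
  omega


lemma exists_hall_matching {v : V} (hv : v ∈ kerG G) :
    ∃ f : {u : V // u ∈ nbhd G (kerG G)} → V, Function.Injective f ∧
      ∀ u, f u ∈ (kerG G).erase v ∧ G.Adj u.1 (f u) := by
  classical
  let t : {u : V // u ∈ nbhd G (kerG G)} → Finset V :=
    fun u => ((kerG G).erase v).filter (fun x => G.Adj u.1 x)
  have hhall : ∀ s : Finset {u // u ∈ nbhd G (kerG G)}, s.card ≤ (s.biUnion t).card := by
    intro s
    have h1 : s.card = (s.image Subtype.val).card :=
      (Finset.card_image_of_injective s Subtype.val_injective).symm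
    have hsub : s.image Subtype.val ⊆ nbhd G (kerG G) := by
      intro x hx
      rw [Finset.mem_image] at hx
      obtain ⟨u, _, rfl⟩ := hx
      exact u.2
    have h2 : s.biUnion t = (kerG G).erase v ∩ nbhd G (s.image Subtype.val) := by
      ext x
      simp only [Finset.mem_biUnion, Finset.mem_filter, Finset.mem_inter, mem_nbhd,
        Finset.mem_image, t]
      constructor
      · rintro ⟨u, hu, hx1, hx2⟩
        exact ⟨hx1, u.1, ⟨u, hu, rfl⟩, hx2⟩
      · rintro ⟨hx1, a, ⟨u, hu, rfl⟩, hx2⟩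
        exact ⟨u, hu, hx1, hx2⟩
    rw [h1, h2]
    exact hall_cond G hv hsub
  obtain ⟨f, hf, hft⟩ := (Finset.all_card_le_biUnion_card_iff_exists_injective t).1 hhall
  refine ⟨f, hf, fun u => ?_⟩
  have := hft u
  rw [Finset.mem_filter] at this
  exact this

lemma exists_max_missing_v {v : V} (hv : v ∈ kerG G) :
    matchNum G = (nbhd G (kerG G)).card + muR G ∧
    ∃ M : Finset (Sym2 V), IsMatchingF G M ∧ M.card = matchNum G ∧ ∀ e ∈ M, v ∉ e := by
  classical
  obtain ⟨f, hfinj, hf⟩ := exists_hall_matching G hv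
  -- a maximal restricted matching
  have hne : ((Finset.univ : Finset (Finset (Sym2 V))).filter (fun M => IsMatchingF G M ∧
      ∀ e ∈ M, ∀ x ∈ e, x ∈ Finset.univ \ (kerG G ∪ nbhd G (kerG G)))).Nonempty := by
    refine ⟨∅, ?_⟩
    simp [IsMatchingF]
  obtain ⟨MR, hMRmem, hMRcard⟩ := Finset.exists_mem_eq_sup _ hne Finset.card
  rw [Finset.mem_filter] at hMRmem
  obtain ⟨-, hMR, hMRavoid⟩ := hMRmem
  -- the Hall matching as a finset of edges
  set Mf : Finset (Sym2 V) :=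
    (nbhd G (kerG G)).attach.image (fun u => s(u.1, f u)) with hMf
  have hker_nb : ∀ x, x ∈ kerG G → x ∉ nbhd G (kerG G) := fun x hx => kerG_not_mem_nbhd G hx
  have hfk : ∀ u, f u ∈ kerG G := fun u => Finset.mem_of_mem_erase (hf u).1
  have hMfcard : Mf.card = (nbhd G (kerG G)).card := by
    rw [hMf, Finset.card_image_of_injective _ ?_, Finset.card_attach]
    intro u u' heq
    rw [Sym2.eq_iff] at heq
    rcases heq with ⟨h1, h2⟩ | ⟨h1, h2⟩
    · exact Subtype.ext h1
    · exact absurd (h1 ▸ u.2) (hker_nb _ (hfk u'))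
  have hMfmem : ∀ e ∈ Mf, ∃ u : {u : V // u ∈ nbhd G (kerG G)}, e = s(u.1, f u) := by
    intro e he
    rw [hMf, Finset.mem_image] at he
    obtain ⟨u, _, rfl⟩ := he
    exact ⟨u, rfl⟩
  have hdisj : ∀ e ∈ Mf, ∀ e' ∈ MR, ∀ x, x ∈ e → x ∉ e' := by
    intro e he e' he' x hx hx'
    obtain ⟨u, rfl⟩ := hMfmem e he
    have hxR := hMRavoid e' he' x hx'
    rw [Finset.mem_sdiff, Finset.mem_union] at hxR
    rw [Sym2.mem_iff] at hx
    rcases hx with rfl | rfl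
    · exact hxR.2 (Or.inr u.2)
    · exact hxR.2 (Or.inl (hfk u))
  have hmatch : IsMatchingF G (Mf ∪ MR) := by
    constructor
    · intro e he
      rw [Finset.mem_coe, Finset.mem_union] at he
      rcases he with he | he
      · obtain ⟨u, rfl⟩ := hMfmem e he
        rw [SimpleGraph.mem_edgeSet]
        exact (hf u).2
      · exact hMR.1 he
    · intro e₁ he₁ e₂ he₂ hne' x hx
      rw [Finset.mem_union] at he₁ he₂
      rcases he₁ with he₁ | he₁ <;> rcases he₂ with he₂ | he₂
      · obtain ⟨u, rfl⟩ := hMfmem e₁ he₁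
        obtain ⟨u', rfl⟩ := hMfmem e₂ he₂
        intro hx₂
        rw [Sym2.mem_iff] at hx hx₂
        have huu : u ≠ u' := fun h => hne' (by rw [h])
        rcases hx with rfl | rfl <;> rcases hx₂ with h | h
        · exact huu (Subtype.ext h)
        · exact hker_nb _ (h ▸ hfk u') u.2
        · exact hker_nb _ (hfk u) (h ▸ u'.2)
        · exact huu (hfinj h)
      · exact hdisj e₁ he₁ e₂ he₂ x hx
      · intro hx₂
        exact hdisj e₂ he₂ e₁ he₁ x hx₂ hx
      · exact hMR.2 e₁ he₁ e₂ he₂ hne' x hx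
  have hdisjMf : Disjoint Mf MR := by
    rw [Finset.disjoint_left]
    intro e he he'
    obtain ⟨u, rfl⟩ := hMfmem e he
    exact hdisj _ he _ he' u.1 (Sym2.mem_mk_left _ _) (Sym2.mem_mk_left _ _)
  have hcard : (Mf ∪ MR).card = (nbhd G (kerG G)).card + muR G := by
    rw [Finset.card_union_of_disjoint hdisjMf, hMfcard, ← hMRcard]
    rfl
  have hle : matchNum G ≤ (Mf ∪ MR).card := hcard ▸ matchNum_le_bound G
  have heq : matchNum G = (nbhd G (kerG G)).card + muR G :=
    le_antisymm (matchNum_le_bound G) (hcard ▸ card_le_matchNum G hmatch)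
  refine ⟨heq, Mf ∪ MR, hmatch, le_antisymm (card_le_matchNum G hmatch) hle, ?_⟩
  intro e he hv'
  rw [Finset.mem_union] at he
  rcases he with he | he
  · obtain ⟨u, rfl⟩ := hMfmem e he
    rw [Sym2.mem_iff] at hv'
    rcases hv' with rfl | rfl
    · exact hker_nb _ hv u.2
    · exact (Finset.mem_erase.1 (hf u).1).1 rfl
  · have := hMRavoid e he v hv'
    rw [Finset.mem_sdiff, Finset.mem_union] at this
    exact this.2 (Or.inl hv)


theorem stmt18' : kerG G ⊆ singlesD G := by
  intro v hv
  obtain ⟨hnum, hex⟩ := exists_max_missing_v G hv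
  simp only [singlesD, Finset.mem_filter]
  have hvD : v ∈ gallaiD G := by
    simp only [gallaiD, Finset.mem_filter]
    exact ⟨Finset.mem_univ _, hex⟩
  refine ⟨hvD, ?_⟩
  intro w hw hadj
  have hwN : w ∈ nbhd G (kerG G) := (mem_nbhd G).2 ⟨v, hv, hadj⟩
  simp only [gallaiD, Finset.mem_filter] at hw
  obtain ⟨-, M, hM, hMcard, hmiss⟩ := hw
  have h1 := matching_missing_lt G hM hwN (fun e he => hmiss e he)
  omega

end Dev

/-- `ker G` lies in the union of the singleton components of `G[D]`. -/
theorem stmt18 {V : Type*} (G : SimpleGraph V) [Fintype V] [DecidableEq V] [DecidableRel G.Adj] :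
    kerG G ⊆ singlesD G := stmt18' G
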